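/- Let g be a finite-dimensional complex simple Lie algebra and β₁, …, β_k mutually orthogonal long roots constructed as in the context, such that σ_i = β₁ + ⋯ + β_i is dominant for every i ≤ k. If l₁, …, l_k are nonnegative integers such that the graded component g_{l₁⋯l_k} contains a nonzero root space, then l₁ + ⋯ + l_k ≤ 2. -/

import Mathlib

/-!
Statement 13 (Landsberg–Manivel, Lemma 6.2): for the `ℤ^k`-grading of `g` defined by
the coroots of the mutually orthogonal long roots `β₁, …, β_k` (with all partial sums
`σ_i` dominant), any nonzero component with nonnegative degrees `l₁, …, l_k` satisfies
`l₁ + ⋯ + l_k ≤ 2`.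
-/

open Finset
open scoped Classical

noncomputable section

namespace Stmt13

variable {L : Type*} [LieRing L] [LieAlgebra ℂ L] (H : LieSubalgebra ℂ L)

/-- The root space of a linear functional `α` on the Cartan subalgebra `H`: the
simultaneous eigenspace of the operators `ad h`, `h ∈ H`, with eigenvalues `α h`. -/
def rootSpace' (α : Module.Dual ℂ H) : Submodule ℂ L where
  carrier := {x | ∀ h : H, ⁅(h : L), x⁆ = α h • x}
  add_mem' := fun {a b} ha hb => by
    intro h; rw [lie_add, ha h, hb h, smul_add]
  zero_mem' := by intro h; rw [lie_zero, smul_zero]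
  smul_mem' := fun c x hx => by
    intro h; rw [lie_smul, hx h, smul_comm]

/-- `α` is a root of `L` with respect to the Cartan subalgebra `H`. -/
def IsRootOf (α : Module.Dual ℂ H) : Prop := α ≠ 0 ∧ rootSpace' H α ≠ ⊥

/-- `α` is a simple root: a positive root which is not the sum of two positive roots. -/
def IsSimpleRootOf (Φpos : Finset (Module.Dual ℂ H)) (α : Module.Dual ℂ H) : Prop :=
  α ∈ Φpos ∧ ∀ β ∈ Φpos, ∀ γ ∈ Φpos, α ≠ β + γ

/-- Nonnegative integer combinations of the simple roots. -/
def posCone (Φpos : Finset (Module.Dual ℂ H)) : AddSubmonoid (Module.Dual ℂ H) :=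
  AddSubmonoid.closure {μ | IsSimpleRootOf H Φpos μ}

/-- `α₀` is the highest root: it is a root and `α₀ - γ` is a nonnegative integer
combination of simple roots, for every root `γ`. -/
def IsHighestRootOf (Φ Φpos : Finset (Module.Dual ℂ H)) (α₀ : Module.Dual ℂ H) : Prop :=
  α₀ ∈ Φ ∧ ∀ γ ∈ Φ, α₀ - γ ∈ posCone H Φpos

/-- `γ` is a long root: its squared length, with respect to the invariant form `B`,
is maximal among all roots. -/
def IsLongRootOf (Φ : Finset (Module.Dual ℂ H))
    (B : Module.Dual ℂ H → Module.Dual ℂ H → ℚ) (γ : Module.Dual ℂ H) : Prop :=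
  γ ∈ Φ ∧ ∀ δ ∈ Φ, B δ δ ≤ B γ γ

/-- `τ` is a highest long root orthogonal to all the elements of `S`:  it is a long root
orthogonal to `S` dominating every long root orthogonal to `S`. -/
def IsHighestLongRootOrtho (Φ Φpos : Finset (Module.Dual ℂ H))
    (B : Module.Dual ℂ H → Module.Dual ℂ H → ℚ) (S : Set (Module.Dual ℂ H))
    (τ : Module.Dual ℂ H) : Prop :=
  IsLongRootOf H Φ B τ ∧ (∀ s ∈ S, B τ s = 0) ∧
    ∀ γ, IsLongRootOf H Φ B γ → (∀ s ∈ S, B γ s = 0) → τ - γ ∈ posCone H Φpos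

/-- The sequence `r 1, …, r k` of mutually orthogonal long roots of the paper:
`r 1 = α₀` is the highest root, and inductively `r i` is a highest long root
orthogonal to `r 1, …, r (i-1)`. -/
def IsOrthogonalRootSeq (Φ Φpos : Finset (Module.Dual ℂ H))
    (B : Module.Dual ℂ H → Module.Dual ℂ H → ℚ)
    (r : ℕ → Module.Dual ℂ H) (k : ℕ) : Prop :=
  IsHighestRootOf H Φ Φpos (r 1) ∧
    ∀ i, 2 ≤ i → i ≤ k →
      IsHighestLongRootOrtho H Φ Φpos B {s | ∃ j, 1 ≤ j ∧ j < i ∧ s = r j} (r i)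

/-- `σ` is a dominant (integral) weight: it pairs with the coroot of every positive
root in a nonnegative integer. -/
def IsDominantOf (Φpos : Finset (Module.Dual ℂ H))
    (B : Module.Dual ℂ H → Module.Dual ℂ H → ℚ) (σ : Module.Dual ℂ H) : Prop :=
  ∀ μ ∈ Φpos, ∃ n : ℕ, 2 * B σ μ = n * B μ μ

open LieModule Module in
lemma B_pos_of_mem
    {L : Type*} [LieRing L] [LieAlgebra ℂ L] [FiniteDimensional ℂ L]
    (H : LieSubalgebra ℂ L) [H.IsCartanSubalgebra]
    (Φ : Finset (Module.Dual ℂ H))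
    (hΦ : ∀ a, a ∈ Φ ↔ IsRootOf H a)
    (B : Module.Dual ℂ H → Module.Dual ℂ H → ℚ)
    (tcov : Module.Dual ℂ H → H)
    (htcov : ∀ (a : Module.Dual ℂ H) (h : H), killingForm ℂ L (tcov a : L) (h : L) = a h)
    (c : ℚ) (hcpos : 0 < c)
    (hBkill : ∀ a ∈ Φ, ∀ b ∈ Φ, (B a b : ℂ) = (c : ℂ) * a (tcov b)) :
    ∀ μ ∈ Φ, 0 < B μ μ := by
  intro μ hμ
  obtain ⟨hμ0, -⟩ := (hΦ μ).1 hμ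
  set t := tcov μ with ht
  have hcne : (c : ℂ) ≠ 0 := by exact_mod_cast hcpos.ne'
  have htr : ∀ h : H, μ h = ∑ χ : Weight ℂ H L,
      finrank ℂ (genWeightSpace L χ) • ((χ : H → ℂ) t * (χ : H → ℂ) h) := by
    intro h
    rw [← htcov μ h]
    have h1 : killingForm ℂ L (t:L) (h:L) = LieModule.traceForm ℂ H L t h := rfl
    rw [h1, LieModule.traceForm_eq_sum_finrank_nsmul_mul]
  have key : ∀ χ : Weight ℂ H L, ∃ q : ℚ, (χ : H → ℂ) t = (q : ℂ) := by
    intro χ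
    rcases eq_or_ne (χ : H → ℂ) 0 with h0 | h0
    · exact ⟨0, by rw [h0]; simp⟩
    · obtain ⟨m, hm0, hm⟩ := LieModule.exists_forall_lie_eq_smul ℂ H L χ
      set α' : Module.Dual ℂ H := Weight.toLinear ℂ H L χ with hα'
      have hα'Φ : α' ∈ Φ := by
        refine (hΦ α').2 ⟨?_, ?_⟩
        · intro hz
          apply h0
          ext x
          have : α' x = 0 := by rw [hz]; rfl
          exact this
        · rw [Submodule.ne_bot_iff]
          refine ⟨m, fun x => ?_, hm0⟩
          rw [← LieSubalgebra.coe_bracket_of_module, hm x]; rfl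
      have hB := hBkill α' hα'Φ μ hμ
      refine ⟨B α' μ / c, ?_⟩
      have hat : α' t = (χ : H → ℂ) t := rfl
      rw [← hat]
      field_simp
      rw [mul_comm] at hB
      simp only [Rat.cast_div, hB, mul_div_cancel_right₀ _ hcne, ht]
  choose F hF using key
  have hQ : B μ μ = c * ∑ χ : Weight ℂ H L,
      (finrank ℂ (genWeightSpace L (χ : H → ℂ)) : ℚ) * (F χ)^2 := by
    have h1 : (B μ μ : ℂ) = (c : ℂ) * μ t := hBkill μ hμ μ hμ
    rw [htr t] at h1
    have h2 : ∑ χ : Weight ℂ H L,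
        finrank ℂ (genWeightSpace L χ) • ((χ : H → ℂ) t * (χ : H → ℂ) t)
        = ((∑ χ : Weight ℂ H L,
          (finrank ℂ (genWeightSpace L (χ : H → ℂ)) : ℚ) * (F χ)^2 : ℚ) : ℂ) := by
      push_cast
      refine Finset.sum_congr rfl fun χ _ => ?_
      rw [hF χ]
      push_cast
      ring
    rw [h2] at h1
    exact_mod_cast h1
  have hterm : ∀ χ : Weight ℂ H L,
      0 ≤ (finrank ℂ (genWeightSpace L (χ : H → ℂ)) : ℚ) * (F χ)^2 :=
    fun χ => mul_nonneg (by positivity) (sq_nonneg _)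
  have hsum_nonneg : 0 ≤ ∑ χ : Weight ℂ H L,
      (finrank ℂ (genWeightSpace L (χ : H → ℂ)) : ℚ) * (F χ)^2 :=
    Finset.sum_nonneg fun χ _ => hterm χ
  rcases hsum_nonneg.lt_or_eq with hlt | heq
  · rw [hQ]; positivity
  · exfalso
    have hzero : ∀ χ : Weight ℂ H L, (χ : H → ℂ) t = 0 := by
      intro χ
      have := (Finset.sum_eq_zero_iff_of_nonneg (fun χ _ => hterm χ)).1 heq.symm χ (Finset.mem_univ χ)
      have hfr : 0 < (finrank ℂ (genWeightSpace L (χ : H → ℂ)) : ℚ) := by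
        exact_mod_cast zero_lt_finrank_genWeightSpace χ.genWeightSpace_ne_bot
      have hF0 : F χ = 0 := by
        rcases mul_eq_zero.1 this with h | h
        · exact absurd h hfr.ne'
        · exact pow_eq_zero_iff (n := 2) (by norm_num) |>.1 h
      rw [hF χ, hF0]; simp
    apply hμ0
    ext h
    have := htr h
    simp only [hzero, zero_mul, smul_zero, Finset.sum_const_zero] at this
    simpa using this

/-- `r 1, …, r k` are the mutually orthogonal long roots of the
paper with all partial sums `σ_i = r 1 + ⋯ + r i` dominant, and `Hc i` is the coroot
of `r i`.  If there is a root `α` with `α (Hc i) = l i` for all `i = 1, …, k`, where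
the `l i` are nonnegative integers, then `l 1 + ⋯ + l k ≤ 2`. -/
theorem sum_of_nonnegative_degrees_le_two
    {L : Type*} [LieRing L] [LieAlgebra ℂ L] [FiniteDimensional ℂ L]
    [LieAlgebra.IsSimple ℂ L]
    (H : LieSubalgebra ℂ L) [H.IsCartanSubalgebra]
    (Φ Φpos : Finset (Module.Dual ℂ H))
    (hΦ : ∀ a, a ∈ Φ ↔ IsRootOf H a)
    (hpos_sub : Φpos ⊆ Φ)
    (hpos_mem : ∀ a ∈ Φ, (a ∈ Φpos ↔ -a ∉ Φpos))
    (hpos_add : ∀ a ∈ Φpos, ∀ b ∈ Φpos, a + b ∈ Φ → a + b ∈ Φpos)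
    -- `B` is an invariant scalar product on weights: it is symmetric, biadditive,
    -- ℚ-homogeneous, and on roots it is a positive multiple `c` of the scalar product
    -- induced by the Killing form (via the covector map `tcov`).
    (B : Module.Dual ℂ H → Module.Dual ℂ H → ℚ)
    (hBsymm : ∀ x y, B x y = B y x)
    (hBadd : ∀ x y z, B (x + y) z = B x z + B y z)
    (hBsmul : ∀ (q : ℚ) (x y), B ((q : ℂ) • x) y = q * B x y)
    (tcov : Module.Dual ℂ H → H)
    (htcov : ∀ (a : Module.Dual ℂ H) (h : H), killingForm ℂ L (tcov a : L) (h : L) = a h)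
    (c : ℚ) (hcpos : 0 < c)
    (hBkill : ∀ a ∈ Φ, ∀ b ∈ Φ, (B a b : ℂ) = (c : ℂ) * a (tcov b))
    (k : ℕ) (r : ℕ → Module.Dual ℂ H)
    (hseq : IsOrthogonalRootSeq H Φ Φpos B r k)
    (hdom : ∀ i, 1 ≤ i → i ≤ k → IsDominantOf H Φpos B (∑ j ∈ Finset.Icc 1 i, r j))
    -- the coroots of the `r i`
    (Hc : ℕ → H)
    (hHc : ∀ i, 1 ≤ i → i ≤ k → ∀ μ ∈ Φ,
      (B (r i) (r i) : ℂ) * μ (Hc i) = 2 * (B μ (r i) : ℂ))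
    (l : ℕ → ℕ)
    (hl : ∃ α ∈ Φ, ∀ i, 1 ≤ i → i ≤ k → α (Hc i) = (l i : ℂ)) :
    ∑ i ∈ Finset.Icc 1 k, l i ≤ 2 := by
  rcases Nat.eq_zero_or_pos k with hk0 | hk
  · simp [hk0]
  obtain ⟨α, hαΦ, hαl⟩ := hl
  have Bpos : ∀ μ ∈ Φ, 0 < B μ μ := B_pos_of_mem H Φ hΦ B tcov htcov c hcpos hBkill
  -- bilinearity helpers
  have hB0 : ∀ y, B 0 y = 0 := by
    intro y
    have h := hBadd 0 0 y
    rw [add_zero] at h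
    linarith
  have hBadd' : ∀ x y z, B x (y + z) = B x y + B x z := fun x y z => by
    rw [hBsymm, hBadd, hBsymm y x, hBsymm z x]
  have hB0' : ∀ x, B x 0 = 0 := fun x => by rw [hBsymm]; exact hB0 x
  have hBsub' : ∀ x y z, B x (y - z) = B x y - B x z := by
    intro x y z
    have h := hBadd' x (y - z) z
    rw [sub_add_cancel] at h
    linarith
  have hBsumfst : ∀ (y : Module.Dual ℂ H) (s : Finset ℕ) (f : ℕ → Module.Dual ℂ H),
      B (∑ j ∈ s, f j) y = ∑ j ∈ s, B (f j) y := by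
    intro y s f
    exact map_sum (AddMonoidHom.mk' (fun x => B x y) (fun a b => hBadd a b y)) f s
  -- the roots r i
  have hrΦ : ∀ i, 1 ≤ i → i ≤ k → r i ∈ Φ := by
    intro i h1 h2
    rcases eq_or_lt_of_le h1 with h | h
    · rw [← h]; exact hseq.1.1
    · exact ((hseq.2 i h h2).1).1
  have horth : ∀ i j, 1 ≤ j → j < i → i ≤ k → B (r i) (r j) = 0 := by
    intro i j hj hji hik
    exact (hseq.2 i (by omega) hik).2.1 (r j) ⟨j, hj, hji, rfl⟩
  have hb1le : ∀ i, 1 ≤ i → i ≤ k → B (r 1) (r 1) ≤ B (r i) (r i) := by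
    intro i h1 h2
    rcases eq_or_lt_of_le h1 with h | h
    · rw [← h]
    · exact ((hseq.2 i h h2).1).2 (r 1) (hrΦ 1 le_rfl hk)
  have hb1pos : 0 < B (r 1) (r 1) := Bpos (r 1) (hrΦ 1 le_rfl hk)
  set σ : Module.Dual ℂ H := ∑ j ∈ Finset.Icc 1 k, r j with hσ
  -- degrees
  have hlb : ∀ i ∈ Finset.Icc 1 k, (l i : ℚ) * B (r i) (r i) = 2 * B α (r i) := by
    intro i hi
    rw [Finset.mem_Icc] at hi
    have h := hHc i hi.1 hi.2 α hαΦ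
    rw [hαl i hi.1 hi.2] at h
    have : ((((l i : ℚ)) * B (r i) (r i) : ℚ) : ℂ) = ((2 * B α (r i) : ℚ) : ℂ) := by
      push_cast
      rw [mul_comm]
      exact h
    exact_mod_cast this
  -- dominance: B σ is nonnegative on the positive cone
  have hcone : ∀ x ∈ posCone H Φpos, 0 ≤ B σ x := by
    intro x hx
    induction hx using AddSubmonoid.closure_induction with
    | mem μ hμ =>
      obtain ⟨n, hn⟩ := hdom k hk le_rfl μ hμ.1
      have hμΦ : μ ∈ Φ := hpos_sub hμ.1
      have := Bpos μ hμΦ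
      nlinarith [Nat.cast_nonneg (α := ℚ) n]
    | zero => rw [hB0' σ]
    | add x y hx hy ihx ihy => rw [hBadd' σ x y]; linarith
  -- B σ (r 1) = B (r 1) (r 1)
  have hσr1 : B σ (r 1) = B (r 1) (r 1) := by
    rw [hσ, hBsumfst]
    rw [Finset.sum_eq_single_of_mem 1 (Finset.mem_Icc.2 ⟨le_rfl, hk⟩)]
    intro j hj hj1
    rw [Finset.mem_Icc] at hj
    exact horth j 1 le_rfl (by omega) hj.2
  -- B σ α ≤ B σ (r 1)
  have hle1 : B σ α ≤ B σ (r 1) := by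
    have hmem := hseq.1.2 α hαΦ
    have := hcone (r 1 - α) hmem
    rw [hBsub'] at this
    linarith
  -- sum identity
  have hsum : ∑ i ∈ Finset.Icc 1 k, (l i : ℚ) * B (r i) (r i) = 2 * B σ α := by
    rw [Finset.sum_congr rfl hlb, ← Finset.mul_sum, hσ, hBsumfst]
    congr 1
    exact Finset.sum_congr rfl fun i _ => hBsymm α (r i)
  -- final chain
  have hchain : (∑ i ∈ Finset.Icc 1 k, (l i : ℚ)) * B (r 1) (r 1) ≤ 2 * B (r 1) (r 1) := by
    calc (∑ i ∈ Finset.Icc 1 k, (l i : ℚ)) * B (r 1) (r 1)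
        = ∑ i ∈ Finset.Icc 1 k, (l i : ℚ) * B (r 1) (r 1) := by rw [Finset.sum_mul]
      _ ≤ ∑ i ∈ Finset.Icc 1 k, (l i : ℚ) * B (r i) (r i) := by
          refine Finset.sum_le_sum fun i hi => ?_
          rw [Finset.mem_Icc] at hi
          exact mul_le_mul_of_nonneg_left (hb1le i hi.1 hi.2) (Nat.cast_nonneg _)
      _ = 2 * B σ α := hsum
      _ ≤ 2 * B σ (r 1) := by linarith
      _ = 2 * B (r 1) (r 1) := by rw [hσr1]
  have hS : (∑ i ∈ Finset.Icc 1 k, (l i : ℚ)) ≤ 2 :=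
    le_of_mul_le_mul_right (by linarith) hb1pos
  have : ((∑ i ∈ Finset.Icc 1 k, l i : ℕ) : ℚ) ≤ 2 := by push_cast; exact hS
  exact_mod_cast this


end Stmt13
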